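/- Fix an integer n ≥ 2 and set b := -n + i. Let D ⊆ {0, 1, …, n²} be such that Δ := D − D is sparse. Let (α_j)_{j≥1} be a sequence with α_j ∈ Δ for all j, set α := π((α_j)), and let C(α) := C_{n,D} ∩ (C_{n,D} + α). Then for every k ≥ 1: (a) for every tuple (d_1, …, d_k) with d_j ∈ D ∩ (D + α_j) for each j, the k-tile T_{d_1…d_k} intersects C(α); and (b) C(α) is contained in the union of the k-tiles T_{d_1…d_k} over all tuples (d_1, …, d_k) with d_j ∈ D ∩ (D + α_j) for each j. -/

import Mathlib

open Complex Filter Pointwise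

/-- `piSum b d = ∑_{j≥1} d_j b^{-j}` (0-indexed: `d j` is the `(j+1)`-st digit). -/
noncomputable def piSum (b : ℂ) (d : ℕ → ℤ) : ℂ :=
  ∑' j : ℕ, (d j : ℂ) * b ^ (-((j : ℤ) + 1))

/-- The `n`-th fundamental tile `T_n`. -/
def fundTile (n : ℕ) : Set ℂ :=
  {z | ∃ d : ℕ → ℤ, (∀ j, 0 ≤ d j ∧ d j ≤ (n : ℤ) ^ 2) ∧
    z = piSum (-(n : ℂ) + Complex.I) d}

/-- The restricted digit set `C_{n,D}`. -/
def restrictedDigitSet (n : ℕ) (D : Set ℤ) : Set ℂ :=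
  {z | ∃ d : ℕ → ℤ, (∀ j, d j ∈ D) ∧ z = piSum (-(n : ℂ) + Complex.I) d}

/-- The `k`-tile of a set `T` with digits `d_1, …, d_k` (0-indexed). -/
def kTile (b : ℂ) (T : Set ℂ) (k : ℕ) (d : Fin k → ℤ) : Set ℂ :=
  {z | ∃ t ∈ T, z = (∑ j : Fin k, (d j : ℂ) * b ^ (-((j : ℤ) + 1))) + b ^ (-(k : ℤ)) * t}

/-- `Δ` is sparse: all distinct pairs differ by more than `2` when `n ≥ 5`,
and by more than `3` when `n ∈ {2, 3, 4}`. -/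
def Sparse (n : ℕ) (Δ : Set ℤ) : Prop :=
  ∀ δ ∈ Δ, ∀ δ' ∈ Δ, δ ≠ δ' →
    (5 ≤ n → 2 < |δ - δ'|) ∧ (n = 2 ∨ n = 3 ∨ n = 4 → 3 < |δ - δ'|)

namespace Stmt8Aux

/-- the base -/
noncomputable def B (n : ℕ) : ℂ := -(n : ℂ) + Complex.I

lemma B_re (n : ℕ) : (B n).re = -(n:ℝ) := by simp [B]
lemma B_im (n : ℕ) : (B n).im = 1 := by simp [B]
lemma B_ne_zero (n : ℕ) : B n ≠ 0 := by
  intro h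
  have := B_im n
  rw [h] at this
  simp at this
lemma normSq_B (n : ℕ) : Complex.normSq (B n) = (n:ℝ)^2 + 1 := by
  rw [Complex.normSq_apply, B_re, B_im]; ring
lemma abs_B (n : ℕ) : ‖B n‖ = Real.sqrt ((n:ℝ)^2 + 1) := by
  rw [Complex.norm_def, normSq_B]
lemma one_lt_abs_B (n : ℕ) (hn : 1 ≤ n) : 1 < ‖B n‖ := by
  have h0 : (0:ℝ) ≤ ‖B n‖ := norm_nonneg _
  have h2 : (‖B n‖)^2 = (n:ℝ)^2 + 1 := by rw [Complex.sq_norm, normSq_B]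
  have hn1 : (1:ℝ) ≤ (n:ℝ) := by exact_mod_cast hn
  nlinarith

/-- rewrite zpow to inverse-pow -/
lemma zpow_neg_succ (b : ℂ) (j : ℕ) : b ^ (-((j:ℤ) + 1)) = (b⁻¹) ^ (j+1) := by
  have h : -((j:ℤ)+1) = -((j+1 : ℕ) : ℤ) := by push_cast; ring
  rw [h, zpow_neg, zpow_natCast, inv_pow]

lemma zpow_neg_nat (b : ℂ) (k : ℕ) : b ^ (-(k:ℤ)) = (b⁻¹) ^ k := by
  rw [zpow_neg, zpow_natCast, inv_pow]

lemma piSum_eq (b : ℂ) (d : ℕ → ℤ) :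
    piSum b d = ∑' j : ℕ, (d j : ℂ) * (b⁻¹) ^ (j+1) := by
  unfold piSum
  exact tsum_congr fun j => by rw [zpow_neg_succ]

/-- summability -/
lemma summable_term {b : ℂ} (hb : 1 < ‖b‖) (d : ℕ → ℤ) (M : ℝ)
    (hM : ∀ j, |(d j : ℝ)| ≤ M) :
    Summable (fun j : ℕ => (d j : ℂ) * (b⁻¹) ^ (j+1)) := by
  set x : ℝ := (‖b‖)⁻¹ with hx
  have hx0 : 0 ≤ x := inv_nonneg.2 (norm_nonneg _)
  have hx1 : x < 1 := inv_lt_one_of_one_lt₀ hb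
  apply Summable.of_norm_bounded (g := fun j => (M * x) * x ^ j)
    ((summable_geometric_of_lt_one hx0 hx1).mul_left _)
  intro j
  have : ‖(d j : ℂ) * (b⁻¹) ^ (j+1)‖ = |(d j : ℝ)| * x ^ (j+1) := by
    rw [norm_mul, norm_pow, norm_inv]
    simp [Complex.norm_intCast, hx]
  rw [this, pow_succ]
  have hxj : (0:ℝ) ≤ x ^ j := pow_nonneg hx0 j
  calc |(d j : ℝ)| * (x ^ j * x) ≤ M * (x ^ j * x) := by
        apply mul_le_mul_of_nonneg_right (hM j) (by positivity)
    _ = (M * x) * x ^ j := by ring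

/-- Im of powers -/
lemma im_pow_le (w : ℂ) : ∀ m : ℕ, |(w ^ (m+1)).im| ≤ (m+1) * |w.im| * (‖w‖) ^ m := by
  intro m
  induction m with
  | zero => simp
  | succ m ih =>
    have h1 : w ^ (m+2) = w ^ (m+1) * w := by ring
    rw [h1, Complex.mul_im]
    have hre : |(w ^ (m+1)).re| ≤ (‖w‖) ^ (m+1) := by
      calc |(w ^ (m+1)).re| ≤ ‖w ^ (m+1)‖ := Complex.abs_re_le_norm _
        _ = (‖w‖) ^ (m+1) := by rw [norm_pow]
    have hrew : |w.re| ≤ ‖w‖ := Complex.abs_re_le_norm w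
    have himw : |w.im| ≤ ‖w‖ := Complex.abs_im_le_norm w
    have habs : (0:ℝ) ≤ ‖w‖ := norm_nonneg _
    have habsp : (0:ℝ) ≤ (‖w‖)^m := pow_nonneg habs m
    have himnn : (0:ℝ) ≤ |w.im| := abs_nonneg _
    calc |(w^(m+1)).re * w.im + (w^(m+1)).im * w.re|
        ≤ |(w^(m+1)).re * w.im| + |(w^(m+1)).im * w.re| := abs_add_le _ _
      _ = |(w^(m+1)).re| * |w.im| + |(w^(m+1)).im| * |w.re| := by rw [abs_mul, abs_mul]
      _ ≤ (‖w‖)^(m+1) * |w.im| + ((m+1) * |w.im| * (‖w‖)^m) * (‖w‖) := by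
          gcongr
      _ = (((m:ℝ)+1)+1) * |w.im| * (‖w‖)^(m+1) := by ring
      _ = ((((m+1):ℕ):ℝ)+1) * |w.im| * (‖w‖)^(m+1) := by push_cast; ring

lemma im_tsum_bound (n : ℕ) (hn : 1 ≤ n) (h : ℕ → ℤ) (M : ℝ) (hM0 : 0 ≤ M)
    (hM : ∀ j, |(h j : ℝ)| ≤ M) :
    |(∑' j : ℕ, (h j : ℂ) * ((B n)⁻¹) ^ (j+1)).im| ≤ M / (Real.sqrt ((n:ℝ)^2 + 1) - 1)^2 := by
  set r : ℝ := Real.sqrt ((n:ℝ)^2 + 1) with hrdef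
  set x : ℝ := r⁻¹ with hxdef
  have hr1 : 1 < r := by rw [hrdef, ← abs_B]; exact one_lt_abs_B n hn
  have hr0 : 0 < r := lt_trans one_pos hr1
  have hr2 : r^2 = (n:ℝ)^2 + 1 := Real.sq_sqrt (by positivity)
  have hx0 : 0 ≤ x := inv_nonneg.2 hr0.le
  have hx1 : x < 1 := inv_lt_one_of_one_lt₀ hr1
  have habsc : ‖(B n)⁻¹‖ = x := by rw [norm_inv, abs_B]
  have hcim : |((B n)⁻¹).im| = x^2 := by
    rw [Complex.inv_im, B_im, normSq_B, ← hr2, hxdef]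
    rw [abs_div, abs_neg, abs_one, inv_pow]
    rw [_root_.abs_of_nonneg (by positivity : (0:ℝ) ≤ r^2)]
    rw [one_div]
  have hS : Summable (fun j : ℕ => (h j : ℂ) * ((B n)⁻¹) ^ (j+1)) :=
    summable_term (one_lt_abs_B n hn) h M hM
  -- im of tsum
  have him : (∑' j : ℕ, (h j : ℂ) * ((B n)⁻¹) ^ (j+1)).im
      = ∑' j : ℕ, ((h j : ℂ) * ((B n)⁻¹) ^ (j+1)).im := by
    have := ContinuousLinearMap.map_tsum Complex.imCLM hS
    simpa using this
  -- termwise bound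
  set g : ℕ → ℝ := fun j => (M * x^2) * ((j:ℝ) * x^j) + (M * x^2) * x^j with hgdef
  have hterm : ∀ j : ℕ, |((h j : ℂ) * ((B n)⁻¹) ^ (j+1)).im| ≤ g j := by
    intro j
    have h1 : ((h j : ℂ) * ((B n)⁻¹) ^ (j+1)).im = (h j : ℝ) * (((B n)⁻¹) ^ (j+1)).im := by
      simp [Complex.mul_im]
    rw [h1, abs_mul]
    have h2 := im_pow_le ((B n)⁻¹) j
    rw [hcim, habsc] at h2
    have hxj : (0:ℝ) ≤ x^j := pow_nonneg hx0 j
    calc |(h j : ℝ)| * |(((B n)⁻¹) ^ (j+1)).im|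
        ≤ M * (((j:ℝ)+1) * x^2 * x^j) := by
          apply mul_le_mul (hM j) h2 (abs_nonneg _) hM0
      _ = g j := by rw [hgdef]; ring
  -- summability of g
  have hs1 : Summable (fun j : ℕ => (j:ℝ) * x^j) := by
    have := summable_pow_mul_geometric_of_norm_lt_one (R := ℝ) 1 (r := x)
      (by rw [Real.norm_eq_abs, _root_.abs_of_nonneg hx0]; exact hx1)
    simpa using this
  have hs2 : Summable (fun j : ℕ => x^j) := summable_geometric_of_lt_one hx0 hx1
  have hsg : Summable g := ((hs1.mul_left _).add (hs2.mul_left _))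
  -- tsum of g
  have htg : ∑' j, g j = M * x^2 / (1-x)^2 := by
    rw [hgdef]
    rw [Summable.tsum_add (hs1.mul_left _) (hs2.mul_left _), tsum_mul_left, tsum_mul_left]
    rw [tsum_geometric_of_lt_one hx0 hx1]
    rw [tsum_coe_mul_geometric_of_norm_lt_one
      (by rw [Real.norm_eq_abs, _root_.abs_of_nonneg hx0]; exact hx1)]
    have hx1' : (1:ℝ) - x ≠ 0 := by linarith
    field_simp
    ring
  -- combine
  have habs : Summable (fun j => |((h j : ℂ) * ((B n)⁻¹) ^ (j+1)).im|) :=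
    Summable.of_nonneg_of_le (fun j => abs_nonneg _) hterm hsg
  have hb1 : |(∑' j : ℕ, (h j : ℂ) * ((B n)⁻¹) ^ (j+1)).im| ≤ ∑' j, g j := by
    rw [him]
    calc |∑' j, ((h j : ℂ) * ((B n)⁻¹) ^ (j+1)).im|
        ≤ ∑' j, |((h j : ℂ) * ((B n)⁻¹) ^ (j+1)).im| := by
          have h' : Summable (fun j => ‖((h j : ℂ) * ((B n)⁻¹) ^ (j+1)).im‖) := by
            simp only [Real.norm_eq_abs]; exact habs
          have := norm_tsum_le_tsum_norm h'
          simp only [Real.norm_eq_abs] at this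
          exact this
      _ ≤ ∑' j, g j := Summable.tsum_le_tsum hterm habs hsg
  rw [htg] at hb1
  -- M * x^2/(1-x)^2 = M / (r-1)^2
  have hfin : M * x^2 / (1-x)^2 = M / (r-1)^2 := by
    rw [hxdef]
    have hr1' : r - 1 ≠ 0 := by linarith
    have : (1 : ℝ) - r⁻¹ = (r-1)/r := by field_simp
    rw [this]
    field_simp
  rw [hfin] at hb1
  exact hb1

/-- splitting equation: for `p` and sequence `g` with tsum zero -/
lemma split_eq (n : ℕ) (hn : 1 ≤ n) (g : ℕ → ℤ) (M : ℝ) (hM : ∀ j, |(g j : ℝ)| ≤ M)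
    (hsum : ∑' j : ℕ, (g j : ℂ) * ((B n)⁻¹) ^ (j+1) = 0) (p : ℕ) :
    (∑ i ∈ Finset.range p, (B n)^p * ((g i : ℂ) * ((B n)⁻¹) ^ (i+1)))
      + ∑' i : ℕ, (g (i+p) : ℂ) * ((B n)⁻¹) ^ (i+1) = 0 := by
  have hS : Summable (fun j : ℕ => (g j : ℂ) * ((B n)⁻¹) ^ (j+1)) :=
    summable_term (one_lt_abs_B n hn) g M hM
  have hS2 : Summable (fun j : ℕ => (B n)^p * ((g j : ℂ) * ((B n)⁻¹) ^ (j+1))) :=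
    hS.mul_left _
  have h1 := Summable.sum_add_tsum_nat_add p hS2
  have h2 : ∑' (i : ℕ), (B n)^p * ((g (i+p) : ℂ) * ((B n)⁻¹) ^ ((i+p)+1))
      = ∑' i : ℕ, (g (i+p) : ℂ) * ((B n)⁻¹) ^ (i+1) := by
    apply tsum_congr
    intro i
    have hbc : (B n) * (B n)⁻¹ = 1 := mul_inv_cancel₀ (B_ne_zero n)
    have : ((B n)⁻¹) ^ ((i+p)+1) = ((B n)⁻¹) ^ (i+1) * ((B n)⁻¹)^p := by
      rw [← pow_add]; ring_nf
    rw [this]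
    have hbp : (B n)^p * ((B n)⁻¹)^p = 1 := by
      rw [← mul_pow, hbc, one_pow]
    calc (B n)^p * ((g (i+p) : ℂ) * (((B n)⁻¹) ^ (i+1) * ((B n)⁻¹)^p))
        = ((B n)^p * ((B n)⁻¹)^p) * ((g (i+p) : ℂ) * ((B n)⁻¹) ^ (i+1)) := by ring
      _ = (g (i+p) : ℂ) * ((B n)⁻¹) ^ (i+1) := by rw [hbp, one_mul]
  have h3 : ∑' (j : ℕ), (B n)^p * ((g j : ℂ) * ((B n)⁻¹) ^ (j+1)) = 0 := by
    rw [tsum_mul_left, hsum, mul_zero]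
  rw [← h2]
  rw [h1, h3]

lemma Bpow_mul_inv (n p q : ℕ) (h : q ≤ p) :
    (B n)^p * ((B n)⁻¹)^q = (B n)^(p-q) := by
  have hbc : B n * (B n)⁻¹ = 1 := mul_inv_cancel₀ (B_ne_zero n)
  have hp : p = (p - q) + q := (Nat.sub_add_cancel h).symm
  calc (B n)^p * ((B n)⁻¹)^q = (B n)^((p-q)+q) * ((B n)⁻¹)^q := by rw [← hp]
    _ = (B n)^(p-q) * ((B n * (B n)⁻¹)^q) := by rw [pow_add, mul_pow]; ring
    _ = (B n)^(p-q) := by rw [hbc, one_pow, mul_one]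

lemma key0 (n : ℕ) (hn : 2 ≤ n) (g : ℕ → ℤ)
    (hbd : ∀ j, |g j| ≤ 2*(n:ℤ)^2)
    (hlow : ∀ j, g j ≠ 0 → (5 ≤ n → 3 ≤ |g j|) ∧ (n < 5 → 4 ≤ |g j|))
    (hsum : ∑' j : ℕ, (g j : ℂ) * ((B n)⁻¹) ^ (j+1) = 0) : g 0 = 0 := by
  set r : ℝ := Real.sqrt ((n:ℝ)^2 + 1) with hrdef
  have hn1 : 1 ≤ n := le_trans one_le_two hn
  have hr1 : 1 < r := by rw [hrdef, ← abs_B]; exact one_lt_abs_B n hn1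
  have hr2 : r^2 = (n:ℝ)^2 + 1 := Real.sq_sqrt (by positivity)
  have hrsq : (0:ℝ) < (r-1)^2 := pow_pos (by linarith) 2
  set M : ℝ := 2*(n:ℝ)^2 with hMdef
  have hM0 : 0 ≤ M := by positivity
  have hMr : ∀ j, |(g j : ℝ)| ≤ M := by
    intro j
    have := hbd j
    rw [hMdef]
    exact_mod_cast this
  by_contra h0
  -- first equation (p = 2)
  have E2 := split_eq n hn1 g M hMr hsum 2
  have hfs2 : (∑ i ∈ Finset.range 2, (B n)^2 * ((g i : ℂ) * ((B n)⁻¹) ^ (i+1)))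
      = (g 0 : ℂ) * B n + (g 1 : ℂ) := by
    rw [Finset.sum_range_succ, Finset.sum_range_one]
    have e0 : (B n)^2 * ((g 0 : ℂ) * ((B n)⁻¹) ^ (0+1)) = (g 0 : ℂ) * B n := by
      rw [show (B n)^2 * ((g 0 : ℂ) * ((B n)⁻¹) ^ (0+1))
        = (g 0 : ℂ) * ((B n)^2 * ((B n)⁻¹) ^ 1) from by ring, Bpow_mul_inv n 2 1 (by norm_num)]
      norm_num
    have e1 : (B n)^2 * ((g 1 : ℂ) * ((B n)⁻¹) ^ (1+1)) = (g 1 : ℂ) := by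
      rw [show (B n)^2 * ((g 1 : ℂ) * ((B n)⁻¹) ^ (1+1))
        = (g 1 : ℂ) * ((B n)^2 * ((B n)⁻¹) ^ 2) from by ring, Bpow_mul_inv n 2 2 (by norm_num)]
      norm_num
    rw [e0, e1]
  rw [hfs2] at E2
  set W2 : ℂ := ∑' i : ℕ, (g (i+2) : ℂ) * ((B n)⁻¹) ^ (i+1) with hW2def
  have hIm2 : (g 0 : ℝ) + W2.im = 0 := by
    have := congrArg Complex.im E2
    simpa [Complex.add_im, Complex.mul_im, B_im, B_re] using this
  have hWb2 : |W2.im| ≤ M / (r-1)^2 :=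
    im_tsum_bound n hn1 (fun i => g (i+2)) M hM0 (fun i => hMr (i+2))
  have hg0b : |(g 0 : ℝ)| ≤ M / (r-1)^2 := by
    have : (g 0 : ℝ) = -W2.im := by linarith
    rw [this, abs_neg]
    exact hWb2
  rw [le_div_iff₀ hrsq] at hg0b
  rcases lt_or_ge n 5 with hn5 | hn5
  · -- n ∈ {2,3,4} : |g 0| ≥ 4
    have hg4 : (4:ℝ) ≤ |(g 0 : ℝ)| := by
      have := (hlow 0 h0).2 hn5
      exact_mod_cast (by exact_mod_cast this : (4:ℤ) ≤ |g 0|)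
    rcases Nat.lt_or_ge n 3 with hn3 | hn3
    · -- n = 2 : second equation (p = 3)
      have hn2 : n = 2 := le_antisymm (by omega) hn
      subst hn2
      have E3 := split_eq 2 hn1 g M hMr hsum 3
      have hfs3 : (∑ i ∈ Finset.range 3, (B 2)^3 * ((g i : ℂ) * ((B 2)⁻¹) ^ (i+1)))
          = (g 0 : ℂ) * (B 2)^2 + (g 1 : ℂ) * B 2 + (g 2 : ℂ) := by
        rw [Finset.sum_range_succ, Finset.sum_range_succ, Finset.sum_range_one]
        have e0 : (B 2)^3 * ((g 0 : ℂ) * ((B 2)⁻¹) ^ (0+1)) = (g 0 : ℂ) * (B 2)^2 := by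
          rw [show (B 2)^3 * ((g 0 : ℂ) * ((B 2)⁻¹) ^ (0+1))
            = (g 0 : ℂ) * ((B 2)^3 * ((B 2)⁻¹) ^ 1) from by ring, Bpow_mul_inv 2 3 1 (by norm_num)]
        have e1 : (B 2)^3 * ((g 1 : ℂ) * ((B 2)⁻¹) ^ (1+1)) = (g 1 : ℂ) * B 2 := by
          rw [show (B 2)^3 * ((g 1 : ℂ) * ((B 2)⁻¹) ^ (1+1))
            = (g 1 : ℂ) * ((B 2)^3 * ((B 2)⁻¹) ^ 2) from by ring, Bpow_mul_inv 2 3 2 (by norm_num)]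
          norm_num
        have e2 : (B 2)^3 * ((g 2 : ℂ) * ((B 2)⁻¹) ^ (2+1)) = (g 2 : ℂ) := by
          rw [show (B 2)^3 * ((g 2 : ℂ) * ((B 2)⁻¹) ^ (2+1))
            = (g 2 : ℂ) * ((B 2)^3 * ((B 2)⁻¹) ^ 3) from by ring, Bpow_mul_inv 2 3 3 (by norm_num)]
          norm_num
        rw [e0, e1, e2]
      rw [hfs3] at E3
      set W3 : ℂ := ∑' i : ℕ, (g (i+3) : ℂ) * ((B 2)⁻¹) ^ (i+1) with hW3def
      have hB2im : ((B 2)^2).im = -4 := by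
        rw [sq, Complex.mul_im, B_im, B_re]
        norm_num
      have hIm3 : (g 0 : ℝ) * (-4) + (g 1 : ℝ) + W3.im = 0 := by
        have := congrArg Complex.im E3
        simpa [Complex.add_im, Complex.mul_im, hB2im, B_im, B_re] using this
      have hWb3 : |W3.im| ≤ M / (r-1)^2 :=
        im_tsum_bound 2 hn1 (fun i => g (i+3)) M hM0 (fun i => hMr (i+3))
      have hM8 : M = 8 := by rw [hMdef]; norm_num
      have hdivlt : M / (r-1)^2 < 8 := by
        rw [div_lt_iff₀ hrsq, hM8]
        nlinarith [hr2, hr1]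
      have hg1b := abs_le.1 (hMr 1)
      have hW3' := abs_lt.1 (lt_of_le_of_lt hWb3 hdivlt)
      rw [hM8] at hg1b
      rcases le_abs.1 hg4 with h | h
      · linarith
      · linarith
    · -- n ∈ {3,4}
      have hn3' : (3:ℝ) ≤ (n:ℝ) := by exact_mod_cast hn3
      have h4 : 4 * (r-1)^2 ≤ M :=
        le_trans (by nlinarith [hg4, hrsq] : 4*(r-1)^2 ≤ |(g 0:ℝ)| * (r-1)^2) hg0b
      have h6 : (n:ℝ)^2 + 4 ≤ 4*r := by nlinarith [hr2]
      have hq := mul_le_mul h6 h6 (by positivity) (by linarith)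
      nlinarith [hq, hr2, mul_le_mul hn3' hn3' (by norm_num) (by linarith)]
  · -- n ≥ 5 : |g 0| ≥ 3
    have hg3 : (3:ℝ) ≤ |(g 0 : ℝ)| := by
      have := (hlow 0 h0).1 hn5
      exact_mod_cast (by exact_mod_cast this : (3:ℤ) ≤ |g 0|)
    have hn5' : (5:ℝ) ≤ (n:ℝ) := by exact_mod_cast hn5
    have h4 : 3 * (r-1)^2 ≤ M :=
      le_trans (by nlinarith [hg3, hrsq] : 3*(r-1)^2 ≤ |(g 0:ℝ)| * (r-1)^2) hg0b
    have h6 : (n:ℝ)^2 + 6 ≤ 6*r := by nlinarith [hr2]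
    have hq := mul_le_mul h6 h6 (by positivity) (by linarith)
    nlinarith [hq, hr2, mul_le_mul hn5' hn5' (by norm_num) (by linarith)]

lemma key (n : ℕ) (hn : 2 ≤ n) (g : ℕ → ℤ)
    (hbd : ∀ j, |g j| ≤ 2*(n:ℤ)^2)
    (hlow : ∀ j, g j ≠ 0 → (5 ≤ n → 3 ≤ |g j|) ∧ (n < 5 → 4 ≤ |g j|))
    (hsum : ∑' j : ℕ, (g j : ℂ) * ((B n)⁻¹) ^ (j+1) = 0) : ∀ j, g j = 0 := by
  have hn1 : 1 ≤ n := le_trans one_le_two hn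
  have hMr : ∀ j, |(g j : ℝ)| ≤ 2*(n:ℝ)^2 := fun j => by exact_mod_cast hbd j
  have hS : Summable (fun j : ℕ => (g j : ℂ) * ((B n)⁻¹) ^ (j+1)) :=
    summable_term (one_lt_abs_B n hn1) g _ hMr
  intro j
  induction j using Nat.strong_induction_on with
  | _ j ih =>
    have h1 := Summable.sum_add_tsum_nat_add j hS
    have hzero : (∑ i ∈ Finset.range j, (g i : ℂ) * ((B n)⁻¹) ^ (i+1)) = 0 :=
      Finset.sum_eq_zero fun i hi => by
        rw [ih i (Finset.mem_range.1 hi)]; simp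
    have h2 : (∑' i : ℕ, (g (i+j) : ℂ) * ((B n)⁻¹) ^ ((i+j)+1))
        = ((B n)⁻¹)^j * ∑' i : ℕ, (g (i+j) : ℂ) * ((B n)⁻¹) ^ (i+1) := by
      rw [← tsum_mul_left]
      exact tsum_congr fun i => by rw [pow_add, pow_add]; ring
    rw [hzero, zero_add, hsum, h2] at h1
    have hc : ((B n)⁻¹)^j ≠ 0 := pow_ne_zero _ (inv_ne_zero (B_ne_zero n))
    have h3 : ∑' i : ℕ, (g (i+j) : ℂ) * ((B n)⁻¹) ^ (i+1) = 0 :=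
      (mul_eq_zero.1 h1).resolve_left hc
    have := key0 n hn (fun i => g (i+j)) (fun i => hbd (i+j)) (fun i => hlow (i+j)) h3
    simpa using this

/-- splitting off first k terms of piSum -/
lemma piSum_split {b : ℂ} (hb : 1 < ‖b‖) (d : ℕ → ℤ) (M : ℝ)
    (hM : ∀ j, |(d j : ℝ)| ≤ M) (k : ℕ) :
    piSum b d = (∑ j ∈ Finset.range k, (d j : ℂ) * (b⁻¹) ^ (j+1)) +
        (b⁻¹)^k * piSum b (fun m => d (m+k)) := by
  rw [piSum_eq, piSum_eq, ← Summable.sum_add_tsum_nat_add k (summable_term hb d M hM)]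
  congr 1
  rw [← tsum_mul_left]
  exact tsum_congr fun j => by rw [pow_add, pow_add]; ring

lemma piSum_add {b : ℂ} (hb : 1 < ‖b‖) (u v : ℕ → ℤ) (Mu Mv : ℝ)
    (hu : ∀ j, |(u j : ℝ)| ≤ Mu) (hv : ∀ j, |(v j : ℝ)| ≤ Mv) :
    piSum b (fun j => u j + v j) = piSum b u + piSum b v := by
  rw [piSum_eq, piSum_eq, piSum_eq,
    ← Summable.tsum_add (summable_term hb u Mu hu) (summable_term hb v Mv hv)]
  exact tsum_congr fun j => by push_cast; ring

/-- membership in kTile from a digit expansion agreeing with d on first k digits -/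
lemma mem_kTile (n : ℕ) (hn : 2 ≤ n) (e : ℕ → ℤ)
    (he : ∀ j, 0 ≤ e j ∧ e j ≤ (n:ℤ)^2) (k : ℕ) (d : Fin k → ℤ)
    (hde : ∀ j : Fin k, e (j : ℕ) = d j) :
    piSum (B n) e ∈ kTile (B n) (fundTile n) k d := by
  have hn1 : 1 ≤ n := le_trans one_le_two hn
  have hb := one_lt_abs_B n hn1
  have hM : ∀ j, |(e j : ℝ)| ≤ (n:ℝ)^2 := by
    intro j
    have h1 := (he j).1; have h2 := (he j).2
    rw [_root_.abs_of_nonneg (by exact_mod_cast h1 : (0:ℝ) ≤ (e j : ℝ))]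
    exact_mod_cast h2
  refine ⟨piSum (B n) (fun m => e (m+k)), ⟨fun m => e (m+k), fun m => he (m+k), rfl⟩, ?_⟩
  rw [piSum_split hb e ((n:ℝ)^2) hM k, zpow_neg_nat]
  congr 1
  rw [show (∑ j : Fin k, (d j : ℂ) * (B n) ^ (-((j:ℤ) + 1)))
      = ∑ j : Fin k, (e (j:ℕ) : ℂ) * ((B n)⁻¹) ^ ((j:ℕ)+1) from
    Finset.sum_congr rfl fun j _ => by rw [zpow_neg_succ, hde j]]
  exact (Finset.sum_range fun i => (e i : ℂ) * ((B n)⁻¹) ^ (i+1)) ▸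
    (Fin.sum_univ_eq_sum_range (fun i => (e i : ℂ) * ((B n)⁻¹) ^ (i+1)) k).symm

end Stmt8Aux

open Stmt8Aux in
theorem stmt_8 (n : ℕ) (hn : 2 ≤ n) (D : Set ℤ)
    (hD : D ⊆ Set.Icc 0 ((n : ℤ) ^ 2))
    (hsparse : Sparse n (D - D))
    (α : ℕ → ℤ) (hα : ∀ j, α j ∈ D - D)
    (Cα : Set ℂ)
    (hCα : Cα = restrictedDigitSet n D ∩ (restrictedDigitSet n D + {piSum (-(n : ℂ) + Complex.I) α}))
    (k : ℕ) (hk : 1 ≤ k) :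
    (∀ d : Fin k → ℤ, (∀ j : Fin k, d j ∈ D ∩ (D + {α (j : ℕ)})) →
        (kTile (-(n : ℂ) + Complex.I) (fundTile n) k d ∩ Cα).Nonempty) ∧
      Cα ⊆ ⋃ d : Fin k → ℤ, ⋃ (_ : ∀ j : Fin k, d j ∈ D ∩ (D + {α (j : ℕ)})),
        kTile (-(n : ℂ) + Complex.I) (fundTile n) k d := by
  have hn1 : 1 ≤ n := le_trans one_le_two hn
  have hb := one_lt_abs_B n hn1
  have hBdef : -(n : ℂ) + Complex.I = B n := rfl
  -- real bound for members of D
  have hDb : ∀ m : ℤ, m ∈ D → |(m : ℝ)| ≤ (n:ℝ)^2 := by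
    intro m hm
    obtain ⟨h1, h2⟩ := hD hm
    rw [_root_.abs_of_nonneg (by exact_mod_cast h1 : (0:ℝ) ≤ (m:ℝ))]
    exact_mod_cast h2
  have hαb : ∀ j, |(α j : ℝ)| ≤ (n:ℝ)^2 := by
    intro j
    have h3 : |α j| ≤ (n:ℤ)^2 := by
      obtain ⟨a, ha, a', ha', hde⟩ := Set.mem_sub.1 (hα j)
      have h4 := hD ha; have h5 := hD ha'
      rw [Set.mem_Icc] at h4 h5
      rw [← hde, abs_le]
      omega
    exact_mod_cast h3
  constructor
  · -- part (a)
    intro d hd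
    have hch : ∀ j : ℕ, ∃ a : ℤ, a ∈ D ∧ a - α j ∈ D := by
      intro j
      obtain ⟨a, ha, a', ha', hde⟩ := Set.mem_sub.1 (hα j)
      refine ⟨a, ha, ?_⟩
      rw [← hde]
      simpa using ha'
    choose w hw1 hw2 using hch
    set e : ℕ → ℤ := fun j => if h : j < k then d ⟨j, h⟩ else w j with hedef
    have hde : ∀ j : Fin k, e (j : ℕ) = d j := fun j => dif_pos j.isLt
    have he1 : ∀ j, e j ∈ D := by
      intro j
      by_cases h : j < k
      · rw [hedef]; simp only [dif_pos h]; exact (hd ⟨j, h⟩).1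
      · rw [hedef]; simp only [dif_neg h]; exact hw1 j
    have he2 : ∀ j, e j - α j ∈ D := by
      intro j
      by_cases h : j < k
      · have := (hd ⟨j, h⟩).2
        rw [Set.mem_add] at this
        obtain ⟨x, hx, y, hy, hxy⟩ := this
        rw [Set.mem_singleton_iff] at hy
        subst hy
        have : e j = x + α j := by rw [hedef]; simp only [dif_pos h]; exact hxy.symm
        rw [this]
        simpa using hx
      · rw [hedef]; simp only [dif_neg h]; exact hw2 j
    set z := piSum (B n) e with hzdef
    have hz1 : z ∈ restrictedDigitSet n D := ⟨e, he1, rfl⟩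
    have hz2 : z ∈ restrictedDigitSet n D + {piSum (-(n : ℂ) + Complex.I) α} := by
      rw [Set.mem_add]
      refine ⟨piSum (B n) (fun j => e j - α j), ⟨fun j => e j - α j, he2, rfl⟩,
        piSum (-(n : ℂ) + Complex.I) α, Set.mem_singleton _, ?_⟩
      rw [hBdef]
      rw [← piSum_add hb (fun j => e j - α j) α ((n:ℝ)^2) ((n:ℝ)^2)
        (fun j => hDb _ (he2 j)) hαb]
      simp only [sub_add_cancel]
      rfl
    refine ⟨z, ?_, by rw [hCα]; exact ⟨hz1, hz2⟩⟩
    rw [hBdef]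
    exact mem_kTile n hn e (fun j => hD (he1 j)) k d hde
  · -- part (b)
    intro z hz
    rw [hCα] at hz
    obtain ⟨⟨e, he, hze⟩, hz2⟩ := hz
    rw [Set.mem_add] at hz2
    obtain ⟨y, hy, w, hw, hyw⟩ := hz2
    obtain ⟨f, hf, hyf⟩ := hy
    rw [Set.mem_singleton_iff] at hw
    subst hw
    -- difference series is zero
    set g : ℕ → ℤ := fun j => e j - f j - α j with hgdef
    have hbd : ∀ j, |g j| ≤ 2*(n:ℤ)^2 := by
      intro j
      have h1 := hD (he j); have h2 := hD (hf j)
      rw [Set.mem_Icc] at h1 h2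
      have h3 : |α j| ≤ (n:ℤ)^2 := by
        obtain ⟨a, ha, a', ha', hde⟩ := Set.mem_sub.1 (hα j)
        have h4 := hD ha; have h5 := hD ha'
        rw [Set.mem_Icc] at h4 h5
        rw [← hde, abs_le]
        omega
      rw [hgdef, abs_le] at *
      simp only
      omega
    have hlow : ∀ j, g j ≠ 0 → (5 ≤ n → 3 ≤ |g j|) ∧ (n < 5 → 4 ≤ |g j|) := by
      intro j hne
      have hβ : e j - f j ∈ D - D := Set.mem_sub.2 ⟨e j, he j, f j, hf j, rfl⟩
      have hne' : e j - f j ≠ α j := by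
        intro h
        apply hne
        rw [hgdef]
        simp only
        omega
      have := hsparse _ hβ _ (hα j) hne'
      have hg : g j = (e j - f j) - α j := rfl
      constructor
      · intro h5
        have := this.1 h5
        rw [hg]; omega
      · intro h5
        have := this.2 (by omega)
        rw [hg]; omega
    have hgsum : ∑' j : ℕ, (g j : ℂ) * ((B n)⁻¹) ^ (j+1) = 0 := by
      have hSe := summable_term hb e ((n:ℝ)^2) (fun j => hDb _ (he j))
      have hSf := summable_term hb f ((n:ℝ)^2) (fun j => hDb _ (hf j))
      have hSα := summable_term hb α ((n:ℝ)^2) hαb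
      have hfun : (fun j : ℕ => (g j : ℂ) * ((B n)⁻¹) ^ (j+1))
          = fun j => ((e j : ℂ) * ((B n)⁻¹) ^ (j+1) - (f j : ℂ) * ((B n)⁻¹) ^ (j+1))
              - (α j : ℂ) * ((B n)⁻¹) ^ (j+1) := by
        funext j
        rw [hgdef]
        push_cast
        ring
      rw [hfun, Summable.tsum_sub (hSe.sub hSf) hSα, Summable.tsum_sub hSe hSf]
      have h1 : ∑' j : ℕ, (e j : ℂ) * ((B n)⁻¹) ^ (j+1) = z := by rw [← piSum_eq, ← hBdef, ← hze]
      have h2 : ∑' j : ℕ, (f j : ℂ) * ((B n)⁻¹) ^ (j+1) = y := by rw [← piSum_eq, ← hBdef, ← hyf]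
      have h3 : ∑' j : ℕ, (α j : ℂ) * ((B n)⁻¹) ^ (j+1) = piSum (-(n : ℂ) + Complex.I) α := by
        rw [← piSum_eq, hBdef]
      rw [h1, h2, h3, ← hyw]
      ring
    have hgz := key n hn g hbd hlow hgsum
    have hef : ∀ j, e j = f j + α j := by
      intro j
      have := hgz j
      rw [hgdef] at this
      simp only at this
      omega
    set d : Fin k → ℤ := fun j => e (j : ℕ) with hddef
    have hd : ∀ j : Fin k, d j ∈ D ∩ (D + {α (j : ℕ)}) := by
      intro j
      refine ⟨he _, Set.mem_add.2 ⟨f (j : ℕ), hf _, α (j : ℕ), Set.mem_singleton _, (hef _).symm⟩⟩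
    apply Set.mem_iUnion.2
    refine ⟨d, Set.mem_iUnion.2 ⟨hd, ?_⟩⟩
    rw [hze, hBdef]
    exact mem_kTile n hn e (fun j => hD (he j)) k d (fun j => rfl)
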